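/- Let n ≥ 2 be an integer and let G be a simple graph with N vertices, M edges, and maximum degree Δ ≥ 1. If M ≥ 6·n²·log n and M² ≥ 36·n·N·Δ²·log n, then there exists a partition of the vertex set of G into n parts such that for any two distinct parts there is at least one edge of G with one endpoint in each part. -/

import Mathlib

set_option maxHeartbeats 1600000
set_option linter.unusedSectionVars false

open Finset


section counting
variable {V : Type*} [Fintype V] [DecidableEq V] {n : ℕ}

lemma fiber_card_eq (A : Finset (V → Fin n)) (v : V)
    (hA : ∀ χ ∈ A, ∀ x, Function.update χ v x ∈ A) (c c' : Fin n) :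
    (A.filter (fun χ => χ v = c)).card = (A.filter (fun χ => χ v = c')).card := by
  refine Finset.card_bij' (fun χ _ => Function.update χ v c') (fun χ _ => Function.update χ v c)
    ?_ ?_ ?_ ?_
  · intro χ hχ
    simp only [mem_filter] at hχ ⊢
    exact ⟨hA χ hχ.1 c', by simp⟩
  · intro χ hχ
    simp only [mem_filter] at hχ ⊢
    exact ⟨hA χ hχ.1 c, by simp⟩
  · intro χ hχ
    simp only [mem_filter] at hχ
    funext u
    by_cases hu : u = v
    · subst hu; simp [hχ.2]
    · simp [Function.update_of_ne hu]
  · intro χ hχ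
    simp only [mem_filter] at hχ
    funext u
    by_cases hu : u = v
    · subst hu; simp [hχ.2]
    · simp [Function.update_of_ne hu]

lemma L1 (A : Finset (V → Fin n)) (v : V)
    (hA : ∀ χ ∈ A, ∀ x, Function.update χ v x ∈ A) (c : Fin n) :
    n * (A.filter (fun χ => χ v = c)).card = A.card := by
  have h := Finset.card_eq_sum_card_fiberwise (f := fun χ : V → Fin n => χ v) (s := A)
    (t := univ) (fun x _ => mem_univ _)
  rw [h, Finset.sum_congr rfl (fun x _ => fiber_card_eq A v hA x c)]
  simp [mul_comm]

lemma L2 (A : Finset (V → Fin n)) (v : V)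
    (hA : ∀ χ ∈ A, ∀ x, Function.update χ v x ∈ A) (j : Fin n) :
    n * (A.filter (fun χ => χ v ≠ j)).card + A.card = n * A.card := by
  have h1 := Finset.card_filter_add_card_filter_not (s := A) (p := fun χ => χ v = j)
  have h2 := L1 A v hA j
  have h3 : (A.filter (fun χ => χ v ≠ j)).card = (A.filter (fun χ => ¬ (χ v = j))).card := rfl
  rw [h3]
  calc n * (A.filter (fun χ => ¬ (χ v = j))).card + A.card
      = n * (A.filter (fun χ => ¬ (χ v = j))).card + n * (A.filter (fun χ => χ v = j)).card := by
        rw [h2]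
    _ = n * ((A.filter (fun χ => ¬ (χ v = j))).card + (A.filter (fun χ => χ v = j)).card) := by
        ring
    _ = n * A.card := by rw [Nat.add_comm, h1]

lemma L3 (A : Finset (V → Fin n)) (j : Fin n) (F : Finset V)
    (hA : ∀ χ ∈ A, ∀ u ∈ F, ∀ x, Function.update χ u x ∈ A) :
    n ^ F.card * (A.filter (fun χ => ∀ u ∈ F, χ u ≠ j)).card ≤ (n - 1) ^ F.card * A.card := by
  classical
  induction F using Finset.induction_on generalizing A with
  | empty => simp
  | @insert u F hu ih =>
    set P := A.filter (fun χ => χ u ≠ j) with hP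
    have hfilter : A.filter (fun χ => ∀ u' ∈ insert u F, χ u' ≠ j)
        = P.filter (fun χ => ∀ u' ∈ F, χ u' ≠ j) := by
      rw [hP, Finset.filter_filter]
      apply Finset.filter_congr
      intro χ _
      rw [Finset.forall_mem_insert]
    have hPinv : ∀ χ ∈ P, ∀ u' ∈ F, ∀ x, Function.update χ u' x ∈ P := by
      intro χ hχ u' hu' x
      simp only [hP, mem_filter] at hχ ⊢
      refine ⟨hA χ hχ.1 u' (mem_insert_of_mem hu') x, ?_⟩
      have huu : u ≠ u' := fun h => hu (h ▸ hu')
      rw [Function.update_of_ne huu]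
      exact hχ.2
    have hih := ih P hPinv
    have hL2 := L2 A u (fun χ hχ x => hA χ hχ u (mem_insert_self u F) x) j
    have hn : 0 < n := Fin.pos j
    have hnP : n * P.card = (n - 1) * A.card := by
      have hsub : (n - 1) * A.card + A.card = n * A.card := by
        have : (n - 1) + 1 = n := Nat.succ_pred_eq_of_pos hn
        nlinarith [this]
      have hPA : (A.filter (fun χ => χ u ≠ j)).card = P.card := by rw [hP]
      rw [hPA] at hL2
      exact Nat.add_right_cancel (hL2.trans hsub.symm)
    rw [Finset.card_insert_of_notMem hu, hfilter, pow_succ, pow_succ]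
    calc n ^ F.card * n * (P.filter (fun χ => ∀ u' ∈ F, χ u' ≠ j)).card
        = n * (n ^ F.card * (P.filter (fun χ => ∀ u' ∈ F, χ u' ≠ j)).card) := by ring
      _ ≤ n * ((n - 1) ^ F.card * P.card) := Nat.mul_le_mul_left _ hih
      _ = (n - 1) ^ F.card * (n * P.card) := by ring
      _ = (n - 1) ^ F.card * ((n - 1) * A.card) := by rw [hnP]
      _ = (n - 1) ^ F.card * (n - 1) * A.card := by ring

end counting


section graph
variable {V : Type*} [Fintype V] [DecidableEq V] (G : SimpleGraph V) [DecidableRel G.Adj]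

/-- colorings with no edge inside `s` colored (i,j) -/
def badSet (n : ℕ) (i j : Fin n) (s : Finset V) : Finset (V → Fin n) :=
  univ.filter (fun χ => ¬ ∃ u ∈ s, ∃ w ∈ s, G.Adj u w ∧ χ u = i ∧ χ w = j)

/-- number of ordered adjacent pairs inside s -/
def m2 (s : Finset V) : ℕ := ((s ×ˢ s).filter (fun p => G.Adj p.1 p.2)).card

lemma badSet_update {n : ℕ} {i j : Fin n} {s : Finset V} {v : V} (hv : v ∉ s) :
    ∀ χ ∈ badSet G n i j s, ∀ x, Function.update χ v x ∈ badSet G n i j s := by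
  intro χ hχ x
  simp only [badSet, mem_filter, mem_univ, true_and] at hχ ⊢
  intro ⟨u, hu, w, hw, hadj, h1, h2⟩
  apply hχ
  refine ⟨u, hu, w, hw, hadj, ?_, ?_⟩
  · have huv : u ≠ v := by rintro rfl; exact hv hu
    rwa [Function.update_of_ne huv] at h1
  · have hwv : w ≠ v := by rintro rfl; exact hv hw
    rwa [Function.update_of_ne hwv] at h2

lemma badSet_mono {n : ℕ} {i j : Fin n} {s t : Finset V} (h : t ⊆ s) :
    badSet G n i j s ⊆ badSet G n i j t := by
  intro χ hχ
  simp only [badSet, mem_filter, mem_univ, true_and] at hχ ⊢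
  intro ⟨u, hu, w, hw, rest⟩
  exact hχ ⟨u, h hu, w, h hw, rest⟩

lemma card_filter_fst_eq (s : Finset V) (v : V) :
    (((s ×ˢ s).filter (fun p => G.Adj p.1 p.2)).filter (fun p => p.1 = v)).card
      ≤ (s.filter (fun u => G.Adj v u)).card := by
  apply Finset.card_le_card_of_injOn Prod.snd
  · intro p hp
    simp only [mem_coe, mem_filter, mem_product] at hp
    rcases hp with ⟨⟨⟨h1, h2⟩, hadj⟩, hfst⟩
    simp only [mem_coe, mem_filter]
    exact ⟨h2, hfst ▸ hadj⟩
  · intro p hp q hq hpq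
    simp only [coe_filter, Set.mem_setOf_eq] at hp hq
    exact Prod.ext (hp.2.trans hq.2.symm) hpq

lemma card_filter_snd_eq (s : Finset V) (v : V) :
    (((s ×ˢ s).filter (fun p => G.Adj p.1 p.2)).filter (fun p => p.2 = v)).card
      ≤ (s.filter (fun u => G.Adj v u)).card := by
  apply Finset.card_le_card_of_injOn Prod.fst
  · intro p hp
    simp only [mem_coe, mem_filter, mem_product] at hp
    rcases hp with ⟨⟨⟨h1, h2⟩, hadj⟩, hsnd⟩
    simp only [mem_coe, mem_filter]
    exact ⟨h1, ((hsnd ▸ hadj : G.Adj p.1 v)).symm⟩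
  · intro p hp q hq hpq
    simp only [coe_filter, Set.mem_setOf_eq] at hp hq
    exact Prod.ext hpq (hp.2.trans hq.2.symm)

lemma card_filter_fst_mem (s : Finset V) (W : Finset V) :
    (((s ×ˢ s).filter (fun p => G.Adj p.1 p.2)).filter (fun p => p.1 ∈ W)).card
      ≤ ∑ u ∈ W, G.degree u := by
  rw [Finset.card_eq_sum_card_fiberwise (f := Prod.fst)
    (s := ((s ×ˢ s).filter (fun p => G.Adj p.1 p.2)).filter (fun p => p.1 ∈ W))
    (t := W) (fun p hp => (mem_filter.mp (mem_coe.mp hp)).2)]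
  apply Finset.sum_le_sum
  intro u _
  rw [← SimpleGraph.card_neighborFinset_eq_degree]
  apply Finset.card_le_card_of_injOn Prod.snd
  · intro p hp
    simp only [mem_coe, mem_filter, mem_product, SimpleGraph.mem_neighborFinset] at hp ⊢
    obtain ⟨⟨⟨⟨h1, h2⟩, hadj⟩, hW⟩, heq⟩ := hp
    exact heq ▸ hadj
  · intro p hp q hq hpq
    simp only [coe_filter, Set.mem_setOf_eq] at hp hq
    exact Prod.ext (hp.2.trans hq.2.symm) hpq

lemma card_filter_snd_mem (s : Finset V) (W : Finset V) :
    (((s ×ˢ s).filter (fun p => G.Adj p.1 p.2)).filter (fun p => p.2 ∈ W)).card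
      ≤ ∑ u ∈ W, G.degree u := by
  rw [Finset.card_eq_sum_card_fiberwise (f := Prod.snd)
    (s := ((s ×ˢ s).filter (fun p => G.Adj p.1 p.2)).filter (fun p => p.2 ∈ W))
    (t := W) (fun p hp => (mem_filter.mp (mem_coe.mp hp)).2)]
  apply Finset.sum_le_sum
  intro u _
  rw [← SimpleGraph.card_neighborFinset_eq_degree]
  apply Finset.card_le_card_of_injOn Prod.fst
  · intro p hp
    simp only [mem_coe, mem_filter, mem_product, SimpleGraph.mem_neighborFinset] at hp ⊢
    obtain ⟨⟨⟨⟨h1, h2⟩, hadj⟩, hW⟩, heq⟩ := hp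
    exact ((heq ▸ hadj : G.Adj p.1 u)).symm
  · intro p hp q hq hpq
    simp only [coe_filter, Set.mem_setOf_eq] at hp hq
    exact Prod.ext hpq (hp.2.trans hq.2.symm)

lemma m2_erase (s : Finset V) (v : V) :
    m2 G s ≤ m2 G (s.erase v) + 2 * (s.filter (fun u => G.Adj v u)).card := by
  have hsub : (s ×ˢ s).filter (fun p => G.Adj p.1 p.2) ⊆
      ((s.erase v ×ˢ s.erase v).filter (fun p => G.Adj p.1 p.2))
      ∪ (((s ×ˢ s).filter (fun p => G.Adj p.1 p.2)).filter (fun p => p.1 = v))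
      ∪ (((s ×ˢ s).filter (fun p => G.Adj p.1 p.2)).filter (fun p => p.2 = v)) := by
    intro p hp
    simp only [mem_union, mem_filter, mem_product] at hp ⊢
    by_cases h1 : p.1 = v
    · exact Or.inl (Or.inr ⟨⟨hp.1, hp.2⟩, h1⟩)
    by_cases h2 : p.2 = v
    · exact Or.inr ⟨⟨hp.1, hp.2⟩, h2⟩
    · exact Or.inl (Or.inl ⟨⟨mem_erase.mpr ⟨h1, hp.1.1⟩, mem_erase.mpr ⟨h2, hp.1.2⟩⟩, hp.2⟩)
  calc m2 G s ≤ _ := Finset.card_le_card hsub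
    _ ≤ _ + (((s ×ˢ s).filter (fun p => G.Adj p.1 p.2)).filter (fun p => p.2 = v)).card :=
        Finset.card_union_le _ _
    _ ≤ (((s.erase v ×ˢ s.erase v).filter (fun p => G.Adj p.1 p.2)).card
          + (((s ×ˢ s).filter (fun p => G.Adj p.1 p.2)).filter (fun p => p.1 = v)).card)
          + (((s ×ˢ s).filter (fun p => G.Adj p.1 p.2)).filter (fun p => p.2 = v)).card := by
        exact Nat.add_le_add_right (Finset.card_union_le _ _) _
    _ ≤ (m2 G (s.erase v) + (s.filter (fun u => G.Adj v u)).card)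
          + (s.filter (fun u => G.Adj v u)).card := by
        apply Nat.add_le_add (Nat.add_le_add_left (card_filter_fst_eq G s v) _)
          (card_filter_snd_eq G s v)
    _ = m2 G (s.erase v) + 2 * (s.filter (fun u => G.Adj v u)).card := by ring

lemma m2_sdiff (s : Finset V) (v : V) (Δ : ℕ) (hdeg : ∀ u, G.degree u ≤ Δ) :
    m2 G s ≤ m2 G (s \ insert v (s.filter (fun u => G.Adj v u)))
      + 2 * ((s.filter (fun u => G.Adj v u)).card
             + (s.filter (fun u => G.Adj v u)).card * Δ) := by
  set D := s.filter (fun u => G.Adj v u) with hD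
  set W := insert v D with hW
  set t := s \ W with ht
  set P := (s ×ˢ s).filter (fun p => G.Adj p.1 p.2) with hPdef
  have hsub : P ⊆ ((t ×ˢ t).filter (fun p => G.Adj p.1 p.2))
      ∪ (P.filter (fun p => p.1 ∈ W)) ∪ (P.filter (fun p => p.2 ∈ W)) := by
    intro p hp
    have hp' := hp
    simp only [hPdef, mem_filter, mem_product] at hp'
    simp only [mem_union, mem_filter]
    by_cases h1 : p.1 ∈ W
    · exact Or.inl (Or.inr ⟨hp, h1⟩)
    by_cases h2 : p.2 ∈ W
    · exact Or.inr ⟨hp, h2⟩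
    · refine Or.inl (Or.inl ?_)
      simp only [mem_filter, mem_product, ht, mem_sdiff]
      exact ⟨⟨⟨hp'.1.1, h1⟩, ⟨hp'.1.2, h2⟩⟩, hp'.2⟩
  have hWsplit : ∀ (f : V × V → V),
      (P.filter (fun p => f p ∈ W)).card
        ≤ (P.filter (fun p => f p = v)).card + (P.filter (fun p => f p ∈ D)).card := by
    intro f
    have : P.filter (fun p => f p ∈ W)
        ⊆ (P.filter (fun p => f p = v)) ∪ (P.filter (fun p => f p ∈ D)) := by
      intro p hp
      simp only [mem_filter, mem_union, hW, mem_insert] at hp ⊢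
      tauto
    exact (Finset.card_le_card this).trans (Finset.card_union_le _ _)
  have hDsum : ∑ u ∈ D, G.degree u ≤ D.card * Δ := by
    calc ∑ u ∈ D, G.degree u ≤ ∑ _u ∈ D, Δ := Finset.sum_le_sum (fun u _ => hdeg u)
      _ = D.card * Δ := by rw [Finset.sum_const, smul_eq_mul]
  have hfst : (P.filter (fun p => p.1 ∈ W)).card ≤ D.card + D.card * Δ := by
    refine (hWsplit Prod.fst).trans (Nat.add_le_add ?_ ?_)
    · exact card_filter_fst_eq G s v
    · exact (card_filter_fst_mem G s D).trans hDsum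
  have hsnd : (P.filter (fun p => p.2 ∈ W)).card ≤ D.card + D.card * Δ := by
    refine (hWsplit Prod.snd).trans (Nat.add_le_add ?_ ?_)
    · exact card_filter_snd_eq G s v
    · exact (card_filter_snd_mem G s D).trans hDsum
  calc m2 G s ≤ _ := Finset.card_le_card hsub
    _ ≤ _ + (P.filter (fun p => p.2 ∈ W)).card := Finset.card_union_le _ _
    _ ≤ (((t ×ˢ t).filter (fun p => G.Adj p.1 p.2)).card + (P.filter (fun p => p.1 ∈ W)).card)
          + (P.filter (fun p => p.2 ∈ W)).card :=
        Nat.add_le_add_right (Finset.card_union_le _ _) _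
    _ ≤ (m2 G t + (D.card + D.card * Δ)) + (D.card + D.card * Δ) :=
        Nat.add_le_add (Nat.add_le_add_left hfst _) hsnd
    _ = m2 G t + 2 * (D.card + D.card * Δ) := by ring

lemma m2_univ : m2 G univ = ∑ u, G.degree u := by
  rw [m2, Finset.card_eq_sum_card_fiberwise (f := Prod.fst) (t := univ) (fun _ _ => mem_univ _)]
  apply Finset.sum_congr rfl
  intro u _
  rw [← SimpleGraph.card_neighborFinset_eq_degree]
  refine Finset.card_bij' (fun p _ => p.2) (fun w _ => (u, w)) ?_ ?_ ?_ ?_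
  · intro p hp
    simp only [mem_filter, mem_product, SimpleGraph.mem_neighborFinset] at hp ⊢
    obtain ⟨⟨_, hadj⟩, heq⟩ := hp
    exact heq ▸ hadj
  · intro w hw
    simp only [SimpleGraph.mem_neighborFinset] at hw
    simp [hw]
  · intro p hp
    simp only [mem_filter] at hp
    exact Prod.ext hp.2.symm rfl
  · intro w _
    rfl

end graph


lemma analytic_ineq (n Δ d : ℕ) (hn : 2 ≤ n) (hΔ : 1 ≤ Δ) (hdΔ : d ≤ Δ) :
    ((n:ℝ) - 2) * Real.exp (2*d*(1/(3*(n:ℝ)*((n:ℝ)+(Δ:ℝ)))))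
      + 2 * (((n:ℝ)-1)/(n:ℝ))^d
          * Real.exp (2*((d:ℝ) + (d:ℝ)*(Δ:ℝ))*(1/(3*(n:ℝ)*((n:ℝ)+(Δ:ℝ))))) ≤ (n:ℝ) := by
  set nn : ℝ := (n:ℝ) with hnn
  set DD : ℝ := (Δ:ℝ) with hDD
  set dd : ℝ := (d:ℝ) with hdd
  have hnn2 : (2:ℝ) ≤ nn := by rw [hnn]; exact_mod_cast hn
  have hDD1 : (1:ℝ) ≤ DD := by rw [hDD]; exact_mod_cast hΔ
  have hd0 : (0:ℝ) ≤ dd := by rw [hdd]; positivity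
  have hdD : dd ≤ DD := by rw [hdd, hDD]; exact_mod_cast hdΔ
  have hnn0 : (0:ℝ) < nn := by linarith
  have hden : (0:ℝ) < 3*nn*(nn+DD) := by positivity
  set β : ℝ := 1/(3*nn*(nn+DD)) with hβ
  have hβ0 : 0 < β := by rw [hβ]; positivity
  set ε : ℝ := 2*dd*β with hε
  set y : ℝ := dd/(3*nn) with hy
  have hy0 : 0 ≤ y := by rw [hy]; positivity
  have hε0 : 0 ≤ ε := by rw [hε]; positivity
  have hεval : ε * (3*nn*(nn+DD)) = 2*dd := by
    rw [hε, hβ]; field_simp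
  have hyval : y * (3*nn) = dd := by
    rw [hy]; field_simp
  have hεsmall : ε ≤ 1/3 := by
    rw [hε, hβ, mul_one_div, div_le_div_iff₀ hden (by norm_num : (0:ℝ) < 3)]
    nlinarith [mul_nonneg hd0 (le_of_lt hnn0)]
  have h1ε : (0:ℝ) < 1 - ε := by linarith
  have h1y : (0:ℝ) < 1 + y := by linarith
  -- Step A : pow bound
  have hA : ((nn-1)/nn)^d ≤ Real.exp (-(dd/nn)) := by
    have hbase : (nn-1)/nn ≤ Real.exp (-(1/nn)) := by
      have := Real.add_one_le_exp (-(1/nn))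
      have heq : (nn-1)/nn = 1 - 1/nn := by field_simp
      rw [heq]; linarith
    have hbase0 : (0:ℝ) ≤ (nn-1)/nn := by
      apply div_nonneg <;> linarith
    calc ((nn-1)/nn)^d ≤ (Real.exp (-(1/nn)))^d := pow_le_pow_left₀ hbase0 hbase d
      _ = Real.exp ((d:ℝ) * (-(1/nn))) := by rw [← Real.exp_nat_mul]
      _ = Real.exp (-(dd/nn)) := by rw [← hdd]; ring_nf
  -- Step B : exponent bound for the t-branch
  have hB : 2*(dd + dd*DD)*β ≤ 2*dd/(3*nn) := by
    rw [hβ, mul_one_div, div_le_div_iff₀ hden (by positivity)]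
    nlinarith [mul_nonneg hd0 (sub_nonneg.mpr hdD), mul_nonneg hd0 (le_of_lt hnn0),
      mul_nonneg (mul_nonneg hd0 (le_of_lt hnn0)) (le_of_lt hnn0)]
  -- Step C : exp(-y) ≤ 1/(1+y)
  have hC : Real.exp (-y) ≤ 1/(1+y) := by
    rw [Real.exp_neg, inv_eq_one_div]
    apply one_div_le_one_div_of_le h1y
    linarith [Real.add_one_le_exp y]
  -- Step D : exp ε ≤ 1/(1-ε)
  have hD : Real.exp ε ≤ 1/(1-ε) := by
    rw [le_div_iff₀ h1ε]
    have h := Real.add_one_le_exp (-ε)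
    have h3 : Real.exp ε * Real.exp (-ε) = 1 := by
      rw [← Real.exp_add]; simp
    nlinarith [Real.exp_pos ε]
  -- combine term2
  have hT2 : 2 * ((nn-1)/nn)^d * Real.exp (2*(dd + dd*DD)*β) ≤ 2 * Real.exp (-y) := by
    have hexp : Real.exp (2*(dd+dd*DD)*β) ≤ Real.exp (2*dd/(3*nn)) := Real.exp_le_exp.mpr hB
    have hmul : ((nn-1)/nn)^d * Real.exp (2*(dd + dd*DD)*β)
        ≤ Real.exp (-(dd/nn)) * Real.exp (2*dd/(3*nn)) :=
      mul_le_mul hA hexp (le_of_lt (Real.exp_pos _)) (le_of_lt (Real.exp_pos _))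
    have heq : Real.exp (-(dd/nn)) * Real.exp (2*dd/(3*nn)) = Real.exp (-y) := by
      rw [← Real.exp_add, hy]
      congr 1
      field_simp
      ring
    rw [heq] at hmul
    linarith
  -- key step
  have hstep : ε*(nn - 2 + nn*y) ≤ 2*y := by
    have h3 : 3*(nn*y) = dd := by linarith [hyval]
    have h4 : ε*(nn-2+nn*y)*(3*nn*(nn+DD)) ≤ 2*y*(3*nn*(nn+DD)) := by
      have e1 : ε*(nn-2+nn*y)*(3*nn*(nn+DD)) = 2*dd*(nn-2) + (2/3)*dd*(3*(nn*y)) := by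
        linear_combination (nn - 2 + nn*y) * hεval
      have e2 : 2*y*(3*nn*(nn+DD)) = 2*dd*(nn+DD) := by
        linear_combination 2*(nn+DD) * hyval
      rw [e1, e2, h3]
      nlinarith [mul_nonneg hd0 (sub_nonneg.mpr hdD)]
    exact le_of_mul_le_mul_right h4 hden
  have hkey : (nn-2)/(1-ε) + 2/(1+y) ≤ nn := by
    rw [div_add_div _ _ (ne_of_gt h1ε) (ne_of_gt h1y), div_le_iff₀ (by positivity)]
    nlinarith [hstep]
  -- assemble
  have hT1 : (nn - 2) * Real.exp (2*dd*β) ≤ (nn-2)/(1-ε) := by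
    rw [← hε, div_eq_mul_one_div]
    exact mul_le_mul_of_nonneg_left hD (by linarith)
  calc (nn - 2) * Real.exp (2*dd*β) + 2 * ((nn-1)/nn)^d * Real.exp (2*(dd + dd*DD)*β)
      ≤ (nn-2)/(1-ε) + 2 * Real.exp (-y) := add_le_add hT1 hT2
    _ ≤ (nn-2)/(1-ε) + 2/(1+y) := by
        have hT2' : 2 * Real.exp (-y) ≤ 2/(1+y) := by
          rw [div_eq_mul_one_div]
          exact mul_le_mul_of_nonneg_left hC (by norm_num)
        linarith
    _ ≤ nn := hkey


section main
variable {V : Type*} [Fintype V] [DecidableEq V] (G : SimpleGraph V) [DecidableRel G.Adj]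


lemma badSet_card_le (n Δ : ℕ) (hn : 2 ≤ n) (hΔ : 1 ≤ Δ)
    (hdeg : ∀ u, G.degree u ≤ Δ) (i j : Fin n) (hij : i ≠ j) (s : Finset V) :
    ((badSet G n i j s).card : ℝ)
      ≤ (n:ℝ) ^ (Fintype.card V)
        * Real.exp (-(m2 G s : ℝ) * (1/(3*(n:ℝ)*((n:ℝ)+(Δ:ℝ))))) := by
  induction s using Finset.strongInduction with
  | _ s ih =>
  have hn0 : (0:ℝ) < n := by positivity
  set β : ℝ := 1/(3*(n:ℝ)*((n:ℝ)+(Δ:ℝ))) with hβ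
  have hβ0 : (0:ℝ) < β := by rw [hβ]; positivity
  have hK0 : (0:ℝ) ≤ (n:ℝ) ^ (Fintype.card V) := by positivity
  rcases Finset.eq_empty_or_nonempty s with rfl | ⟨v, hv⟩
  · have hm2 : m2 G (∅ : Finset V) = 0 := by
      simp [m2]
    rw [hm2]
    simp only [Nat.cast_zero, neg_zero, zero_mul, Real.exp_zero, mul_one]
    have hcard : (badSet G n i j (∅:Finset V)).card ≤ Fintype.card (V → Fin n) :=
      (Finset.card_filter_le _ _).trans (by rw [Finset.card_univ])
    have : ((badSet G n i j (∅:Finset V)).card : ℝ) ≤ (Fintype.card (V → Fin n) : ℝ) := by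
      exact_mod_cast hcard
    calc ((badSet G n i j (∅:Finset V)).card : ℝ) ≤ (Fintype.card (V → Fin n) : ℝ) := this
      _ = (n:ℝ) ^ (Fintype.card V) := by
          rw [Fintype.card_fun, Fintype.card_fin]; push_cast; ring
  · -- main case
    set s' := s.erase v with hs'
    set D := s.filter (fun u => G.Adj v u) with hD
    set t := s \ insert v D with ht
    set d := D.card with hdcard
    have hvD : v ∉ D := by
      rw [hD]; simp [G.irrefl]
    have hvt : v ∉ t := by
      rw [ht]; simp
    have hvs' : v ∉ s' := by rw [hs']; simp
    have hDt : ∀ u ∈ D, u ∉ t := by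
      intro u hu
      rw [ht]; simp only [mem_sdiff, mem_insert, not_and, not_not]
      intro _; exact Or.inr hu
    have hdΔ : d ≤ Δ := by
      rw [hdcard]
      calc D.card ≤ (G.neighborFinset v).card := by
            apply Finset.card_le_card
            intro u hu
            rw [hD] at hu
            simp only [mem_filter] at hu
            simp [SimpleGraph.mem_neighborFinset, hu.2]
        _ = G.degree v := G.card_neighborFinset_eq_degree v
        _ ≤ Δ := hdeg v
    have hss' : s' ⊂ s := Finset.erase_ssubset hv
    have hts : t ⊂ s := by
      refine Finset.ssubset_iff_of_subset (Finset.sdiff_subset) |>.mpr ⟨v, hv, hvt⟩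
    have IH1 := ih s' hss'
    have IH2 := ih t hts
    -- decompose
    have hcard : (badSet G n i j s).card
        = ∑ c : Fin n, ((badSet G n i j s).filter (fun χ => χ v = c)).card :=
      Finset.card_eq_sum_card_fiberwise (fun χ _ => mem_univ _)
    -- other-color fibers
    have hfiber_other : ∀ c : Fin n, c ≠ i → c ≠ j →
        (n:ℝ) * (((badSet G n i j s).filter (fun χ => χ v = c)).card : ℝ)
          ≤ ((badSet G n i j s').card : ℝ) := by
      intro c hci hcj
      have hsub : (badSet G n i j s).filter (fun χ => χ v = c)
          ⊆ (badSet G n i j s').filter (fun χ => χ v = c) := by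
        apply Finset.filter_subset_filter
        exact badSet_mono G (Finset.erase_subset _ _)
      have hL1 := L1 (badSet G n i j s') v (badSet_update G hvs') c
      have : n * ((badSet G n i j s).filter (fun χ => χ v = c)).card
          ≤ (badSet G n i j s').card := by
        rw [← hL1]
        exact Nat.mul_le_mul_left _ (Finset.card_le_card hsub)
      exact_mod_cast this
    -- color i fiber
    have hfiber_i :
        ((n:ℝ)) ^ (d+1) * (((badSet G n i j s).filter (fun χ => χ v = i)).card : ℝ)
          ≤ ((n:ℝ) - 1) ^ d * ((badSet G n i j t).card : ℝ) := by
      set A := (badSet G n i j t).filter (fun χ => ∀ u ∈ D, χ u ≠ j) with hA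
      have hAinv : ∀ χ ∈ A, ∀ x, Function.update χ v x ∈ A := by
        intro χ hχ x
        rw [hA, mem_filter] at hχ ⊢
        refine ⟨badSet_update G hvt χ hχ.1 x, ?_⟩
        intro u hu
        have huv : u ≠ v := fun h => hvD (h ▸ hu)
        rw [Function.update_of_ne huv]
        exact hχ.2 u hu
      have hsub : (badSet G n i j s).filter (fun χ => χ v = i)
          ⊆ A.filter (fun χ => χ v = i) := by
        intro χ hχ
        rw [mem_filter] at hχ
        rw [mem_filter, hA, mem_filter]
        refine ⟨⟨badSet_mono G (hts.subset) hχ.1, ?_⟩, hχ.2⟩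
        intro u hu hjval
        have hχs := hχ.1
        simp only [badSet, mem_filter, mem_univ, true_and] at hχs
        apply hχs
        rw [hD] at hu
        simp only [mem_filter] at hu
        exact ⟨v, hv, u, hu.1, hu.2, hχ.2, hjval⟩
      have htinv : ∀ χ ∈ badSet G n i j t, ∀ u ∈ D, ∀ x, Function.update χ u x ∈ badSet G n i j t := by
        intro χ hχ u hu x
        exact badSet_update G (hDt u hu) χ hχ x
      have hL3 := L3 (badSet G n i j t) j D htinv
      have hL1 := L1 A v hAinv i
      have hnat : n ^ (d+1) * ((badSet G n i j s).filter (fun χ => χ v = i)).card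
          ≤ (n-1) ^ d * (badSet G n i j t).card := by
        calc n ^ (d+1) * ((badSet G n i j s).filter (fun χ => χ v = i)).card
            ≤ n ^ (d+1) * (A.filter (fun χ => χ v = i)).card :=
              Nat.mul_le_mul_left _ (Finset.card_le_card hsub)
          _ = n ^ d * (n * (A.filter (fun χ => χ v = i)).card) := by ring
          _ = n ^ d * A.card := by rw [hL1]
          _ ≤ (n-1) ^ d * (badSet G n i j t).card := hL3
      have hcast : ((n:ℝ) - 1) ^ d = (((n-1 : ℕ) : ℝ)) ^ d := by
        congr 1
        rw [Nat.cast_sub (le_trans one_le_two hn)]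
        norm_num
      rw [hcast]
      have hr := (Nat.cast_le (α := ℝ)).mpr hnat
      push_cast at hr
      exact hr
    -- color j fiber
    have hfiber_j :
        ((n:ℝ)) ^ (d+1) * (((badSet G n i j s).filter (fun χ => χ v = j)).card : ℝ)
          ≤ ((n:ℝ) - 1) ^ d * ((badSet G n i j t).card : ℝ) := by
      set A := (badSet G n i j t).filter (fun χ => ∀ u ∈ D, χ u ≠ i) with hA
      have hAinv : ∀ χ ∈ A, ∀ x, Function.update χ v x ∈ A := by
        intro χ hχ x
        rw [hA, mem_filter] at hχ ⊢
        refine ⟨badSet_update G hvt χ hχ.1 x, ?_⟩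
        intro u hu
        have huv : u ≠ v := fun h => hvD (h ▸ hu)
        rw [Function.update_of_ne huv]
        exact hχ.2 u hu
      have hsub : (badSet G n i j s).filter (fun χ => χ v = j)
          ⊆ A.filter (fun χ => χ v = j) := by
        intro χ hχ
        rw [mem_filter] at hχ
        rw [mem_filter, hA, mem_filter]
        refine ⟨⟨badSet_mono G (hts.subset) hχ.1, ?_⟩, hχ.2⟩
        intro u hu hival
        have hχs := hχ.1
        simp only [badSet, mem_filter, mem_univ, true_and] at hχs
        apply hχs
        rw [hD] at hu
        simp only [mem_filter] at hu
        exact ⟨u, hu.1, v, hv, hu.2.symm, hival, hχ.2⟩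
      have htinv : ∀ χ ∈ badSet G n i j t, ∀ u ∈ D, ∀ x, Function.update χ u x ∈ badSet G n i j t := by
        intro χ hχ u hu x
        exact badSet_update G (hDt u hu) χ hχ x
      have hL3 := L3 (badSet G n i j t) i D htinv
      have hL1 := L1 A v hAinv j
      have hnat : n ^ (d+1) * ((badSet G n i j s).filter (fun χ => χ v = j)).card
          ≤ (n-1) ^ d * (badSet G n i j t).card := by
        calc n ^ (d+1) * ((badSet G n i j s).filter (fun χ => χ v = j)).card
            ≤ n ^ (d+1) * (A.filter (fun χ => χ v = j)).card :=
              Nat.mul_le_mul_left _ (Finset.card_le_card hsub)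
          _ = n ^ d * (n * (A.filter (fun χ => χ v = j)).card) := by ring
          _ = n ^ d * A.card := by rw [hL1]
          _ ≤ (n-1) ^ d * (badSet G n i j t).card := hL3
      have hcast : ((n:ℝ) - 1) ^ d = (((n-1 : ℕ) : ℝ)) ^ d := by
        congr 1
        rw [Nat.cast_sub (le_trans one_le_two hn)]
        norm_num
      rw [hcast]
      have hr := (Nat.cast_le (α := ℝ)).mpr hnat
      push_cast at hr
      exact hr
    -- abbreviations
    set B : ℝ := ((badSet G n i j s).card : ℝ) with hB
    set B' : ℝ := ((badSet G n i j s').card : ℝ) with hB'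
    set Bt : ℝ := ((badSet G n i j t).card : ℝ) with hBt
    set K : ℝ := (n:ℝ) ^ (Fintype.card V) with hK
    set E : ℝ := Real.exp (-(m2 G s : ℝ) * β) with hE
    set X1 : ℝ := Real.exp (2*(d:ℝ)*β) with hX1
    set X2 : ℝ := Real.exp (2*((d:ℝ) + (d:ℝ)*(Δ:ℝ))*β) with hX2
    have hE0 : 0 < E := Real.exp_pos _
    have hn2R : (2:ℝ) ≤ (n:ℝ) := by exact_mod_cast hn
    have hnd0 : (0:ℝ) < (n:ℝ)^(d+1) := by positivity
    -- sum over colors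
    set Y : ℝ := B' / n with hY
    set X : ℝ := ((n:ℝ)-1)^d * Bt / (n:ℝ)^(d+1) with hX
    have hsum : B ≤ 2*X + ((n:ℝ)-2)*Y := by
      have hBsum : B = ∑ c : Fin n,
          (((badSet G n i j s).filter (fun χ => χ v = c)).card : ℝ) := by
        rw [hB, hcard]
        push_cast
        rfl
      have hpt : ∀ c : Fin n,
          (((badSet G n i j s).filter (fun χ => χ v = c)).card : ℝ)
            ≤ if c = i ∨ c = j then X else Y := by
        intro c
        by_cases hc : c = i ∨ c = j
        · rw [if_pos hc, hX, le_div_iff₀ hnd0, mul_comm]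
          rcases hc with rfl | rfl
          · exact hfiber_i
          · exact hfiber_j
        · rw [if_neg hc]
          push_neg at hc
          rw [hY, le_div_iff₀ hn0, mul_comm]
          exact hfiber_other c hc.1 hc.2
      have hgsum : ∑ c : Fin n, (if c = i ∨ c = j then X else Y)
          = 2*X + ((n:ℝ)-2)*Y := by
        rw [Finset.sum_ite]
        rw [Finset.sum_const, Finset.sum_const]
        have hfilter_eq : univ.filter (fun c : Fin n => c = i ∨ c = j) = {i, j} := by
          ext c; simp
        have hcard2 : (univ.filter (fun c : Fin n => c = i ∨ c = j)).card = 2 := by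
          rw [hfilter_eq, Finset.card_insert_of_notMem (by simp [hij]), Finset.card_singleton]
        have hcardc : (univ.filter (fun c : Fin n => ¬(c = i ∨ c = j))).card = n - 2 := by
          have htot := Finset.card_filter_add_card_filter_not
            (s := (univ : Finset (Fin n))) (p := fun c : Fin n => c = i ∨ c = j)
          rw [Finset.card_univ, Fintype.card_fin, hcard2] at htot
          exact (Nat.sub_eq_of_eq_add' htot.symm).symm
        rw [hcard2, hcardc]
        have hc2 : ((n - 2 : ℕ) : ℝ) = (n:ℝ) - 2 := by
          rw [Nat.cast_sub hn]; norm_num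
        rw [nsmul_eq_mul, nsmul_eq_mul, hc2]
        norm_num
      calc B = ∑ c : Fin n,
            (((badSet G n i j s).filter (fun χ => χ v = c)).card : ℝ) := hBsum
        _ ≤ ∑ c : Fin n, (if c = i ∨ c = j then X else Y) := Finset.sum_le_sum (fun c _ => hpt c)
        _ = 2*X + ((n:ℝ)-2)*Y := hgsum
    -- m2 inequalities and exponential bounds
    have hm2e : (m2 G s : ℝ) ≤ (m2 G s' : ℝ) + 2*(d:ℝ) := by
      have := m2_erase G s v
      rw [← hD, ← hdcard, ← hs'] at this
      exact_mod_cast this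
    have hm2t : (m2 G s : ℝ) ≤ (m2 G t : ℝ) + 2*((d:ℝ) + (d:ℝ)*(Δ:ℝ)) := by
      have := m2_sdiff G s v Δ hdeg
      rw [← hD, ← hdcard, ← ht] at this
      exact_mod_cast this
    have hB'le : B' ≤ K * (E * X1) := by
      have h2 : Real.exp (-(m2 G s' : ℝ) * β) ≤ E * X1 := by
        rw [hE, hX1, ← Real.exp_add]
        apply Real.exp_le_exp.mpr
        have := mul_le_mul_of_nonneg_right
          (by linarith : -(m2 G s' : ℝ) ≤ -(m2 G s : ℝ) + 2*(d:ℝ)) (le_of_lt hβ0)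
        nlinarith [this]
      calc B' ≤ K * Real.exp (-(m2 G s' : ℝ) * β) := IH1
        _ ≤ K * (E * X1) := mul_le_mul_of_nonneg_left h2 hK0
    have hBtle : Bt ≤ K * (E * X2) := by
      have h2 : Real.exp (-(m2 G t : ℝ) * β) ≤ E * X2 := by
        rw [hE, hX2, ← Real.exp_add]
        apply Real.exp_le_exp.mpr
        have := mul_le_mul_of_nonneg_right
          (by linarith : -(m2 G t : ℝ) ≤ -(m2 G s : ℝ) + 2*((d:ℝ) + (d:ℝ)*(Δ:ℝ)))
          (le_of_lt hβ0)
        nlinarith [this]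
      calc Bt ≤ K * Real.exp (-(m2 G t : ℝ) * β) := IH2
        _ ≤ K * (E * X2) := mul_le_mul_of_nonneg_left h2 hK0
    -- combine
    have hana := analytic_ineq n Δ d hn hΔ hdΔ
    rw [← hβ, ← hX1, ← hX2] at hana
    have hstep2 : 2*X + ((n:ℝ)-2)*Y
        ≤ 2*(((n:ℝ)-1)^d * (K*(E*X2)) / (n:ℝ)^(d+1)) + ((n:ℝ)-2)*((K*(E*X1))/n) := by
      rw [hX, hY]
      gcongr
      · nlinarith [pow_nonneg (by linarith : (0:ℝ) ≤ (n:ℝ)-1) d]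
    have heqfac : 2*(((n:ℝ)-1)^d * (K*(E*X2)) / (n:ℝ)^(d+1)) + ((n:ℝ)-2)*((K*(E*X1))/n)
        = (K*E/(n:ℝ)) * (((n:ℝ)-2)*X1 + 2*(((n:ℝ)-1)/(n:ℝ))^d*X2) := by
      rw [div_pow]
      field_simp
      ring
    have hlast : (K*E/(n:ℝ)) * (((n:ℝ)-2)*X1 + 2*(((n:ℝ)-1)/(n:ℝ))^d*X2) ≤ K*E := by
      have h0 : (0:ℝ) ≤ K*E/(n:ℝ) := by positivity
      calc (K*E/(n:ℝ)) * (((n:ℝ)-2)*X1 + 2*(((n:ℝ)-1)/(n:ℝ))^d*X2)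
          ≤ (K*E/(n:ℝ)) * (n:ℝ) := mul_le_mul_of_nonneg_left hana h0
        _ = K*E := by field_simp
    calc B ≤ 2*X + ((n:ℝ)-2)*Y := hsum
      _ ≤ 2*(((n:ℝ)-1)^d * (K*(E*X2)) / (n:ℝ)^(d+1)) + ((n:ℝ)-2)*((K*(E*X1))/n) := hstep2
      _ = (K*E/(n:ℝ)) * (((n:ℝ)-2)*X1 + 2*(((n:ℝ)-1)/(n:ℝ))^d*X2) := heqfac
      _ ≤ K*E := hlast

end main

-- FINAL



/-- `G` contains a copy of `H`, i.e. a subgraph isomorphic to `H`. -/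
def SimpleGraph.ContainsCopy {α β : Type*} (G : SimpleGraph α) (H : SimpleGraph β) : Prop :=
  ∃ f : β → α, Function.Injective f ∧ ∀ ⦃a b : β⦄, H.Adj a b → G.Adj (f a) (f b)

/-- `G` is an `(n,k)`-graph: its vertex set is the pairwise disjoint union of `n` nonempty
parts, each of size at most `k`, and between any two distinct parts there is exactly one
edge of `G` with one endpoint in each part. -/
def SimpleGraph.IsNKGraph {V : Type*} (G : SimpleGraph V) (n k : ℕ) : Prop :=
  ∃ P : Fin n → Finset V,
    (∀ i, (P i).Nonempty) ∧
    (∀ i, (P i).card ≤ k) ∧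
    (∀ v : V, ∃! i, v ∈ P i) ∧
    (∀ i j, i ≠ j → ∃! e : V × V, e.1 ∈ P i ∧ e.2 ∈ P j ∧ G.Adj e.1 e.2)

/-- There is an `(n,k)`-graph containing no subgraph isomorphic to `H`. -/
def ExistsNKGraphFree (n k : ℕ) {β : Type*} (H : SimpleGraph β) : Prop :=
  ∃ (N : ℕ) (G : SimpleGraph (Fin N)), G.IsNKGraph n k ∧ ¬ G.ContainsCopy H

/-- The split function `f(n,H)`: the least `k` such that some `(n,k)`-graph is `H`-free. -/
noncomputable def splitNumber (n : ℕ) {β : Type*} (H : SimpleGraph β) : ℕ :=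
  sInf {k : ℕ | ExistsNKGraphFree n k H}

/-- The Turán (extremal) number `ex(ℓ,H)`: the maximum number of edges in a simple graph
on `ℓ` vertices containing no subgraph isomorphic to `H`. -/
noncomputable def exNumber (ℓ : ℕ) {β : Type*} (H : SimpleGraph β) : ℕ :=
  sSup {m : ℕ | ∃ G : SimpleGraph (Fin ℓ), ¬ G.ContainsCopy H ∧ G.edgeSet.ncard = m}

/-- Let `n ≥ 2` and let `G` be a graph with `N` vertices, `M` edges and
maximum degree `Δ ≥ 1`. If `M ≥ 6 n² log n` and `M² ≥ 36 n N Δ² log n`, then the vertex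
set of `G` can be partitioned into `n` parts so that between any two distinct parts there
is an edge of `G`. -/
theorem exists_partition_with_crossing_edges {V : Type*} [Fintype V] (G : SimpleGraph V)
    (n N M Δ : ℕ) (hn : 2 ≤ n)
    (hN : Fintype.card V = N) (hM : G.edgeSet.ncard = M)
    (hΔub : ∀ v : V, (G.neighborSet v).ncard ≤ Δ)
    (hΔmax : ∃ v : V, (G.neighborSet v).ncard = Δ) (hΔ : 1 ≤ Δ)
    (h1 : 6 * (n : ℝ) ^ 2 * Real.log n ≤ (M : ℝ))
    (h2 : 36 * (n : ℝ) * (N : ℝ) * (Δ : ℝ) ^ 2 * Real.log n ≤ (M : ℝ) ^ 2) :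
    ∃ P : Fin n → Finset V,
      (∀ v : V, ∃! i, v ∈ P i) ∧
      ∀ i j, i ≠ j → ∃ u ∈ P i, ∃ w ∈ P j, G.Adj u w := by
  classical
  -- basic facts
  have hn1R : (1:ℝ) < (n:ℝ) := by exact_mod_cast hn
  have hlog : 0 < Real.log n := Real.log_pos hn1R
  have hn0 : (0:ℝ) < n := by linarith
  have hΔ0 : (0:ℝ) < (Δ:ℝ) := by exact_mod_cast hΔ
  have hM0 : (0:ℝ) < (M:ℝ) := lt_of_lt_of_le (by positivity) h1
  have hedge : G.edgeFinset.card = M := by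
    rw [← hM, SimpleGraph.edgeFinset, ← Set.ncard_eq_toFinset_card']
  have hdeg : ∀ u, G.degree u ≤ Δ := by
    intro u
    have h := hΔub u
    rwa [Set.ncard_eq_toFinset_card', ← SimpleGraph.neighborFinset_def,
      SimpleGraph.card_neighborFinset_eq_degree] at h
  have hsum : ∑ u, G.degree u = 2 * M := by
    rw [SimpleGraph.sum_degrees_eq_twice_card_edges, hedge]
  have hm2u : m2 G univ = 2 * M := by rw [m2_univ, hsum]
  have hNΔ : 2 * M ≤ N * Δ := by
    rw [← hsum, ← hN, ← Finset.card_univ]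
    calc ∑ u, G.degree u ≤ ∑ _u : V, Δ := Finset.sum_le_sum (fun u _ => hdeg u)
      _ = (univ : Finset V).card * Δ := by rw [Finset.sum_const, smul_eq_mul]
  have hNΔR : 2 * (M:ℝ) ≤ (N:ℝ) * (Δ:ℝ) := by exact_mod_cast hNΔ
  -- derive M ≥ 72 n Δ log n
  have hMΔ : 72 * (n:ℝ) * (Δ:ℝ) * Real.log n ≤ (M:ℝ) := by
    have hc0 : (0:ℝ) ≤ 36 * (n:ℝ) * Real.log n * (Δ:ℝ) := by positivity
    have h7 : 36 * (n:ℝ) * Real.log n * (Δ:ℝ) * (2 * (M:ℝ))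
        ≤ 36 * (n:ℝ) * Real.log n * (Δ:ℝ) * ((N:ℝ) * (Δ:ℝ)) :=
      mul_le_mul_of_nonneg_left hNΔR hc0
    have h8 : (72 * (n:ℝ) * (Δ:ℝ) * Real.log n) * (M:ℝ) ≤ (M:ℝ) * (M:ℝ) := by
      nlinarith [h2, h7]
    have := le_of_mul_le_mul_right h8 hM0
    linarith
  -- strict key inequality
  have hMkey : 3 * (n:ℝ) * ((n:ℝ) + (Δ:ℝ)) * Real.log n < (M:ℝ) := by
    nlinarith [h1, hMΔ, mul_pos (mul_pos hn0 hΔ0) hlog]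
  -- per-pair bound
  set β : ℝ := 1/(3*(n:ℝ)*((n:ℝ)+(Δ:ℝ))) with hβ
  have hden : (0:ℝ) < 3*(n:ℝ)*((n:ℝ)+(Δ:ℝ)) := by positivity
  have hexp : Real.exp (-(2*(M:ℝ)) * β) < (((n:ℝ)^2)⁻¹ : ℝ) := by
    have hval : Real.exp (-(2*(M:ℝ)) * β) < Real.exp (-(2 * Real.log n)) := by
      apply Real.exp_lt_exp.mpr
      rw [hβ, neg_mul, neg_lt_neg_iff, mul_one_div, lt_div_iff₀ hden]
      nlinarith [hMkey]
    have hexp2 : Real.exp (-(2 * Real.log n)) = ((n:ℝ)^2)⁻¹ := by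
      rw [Real.exp_neg]
      congr 1
      rw [show (2:ℝ) * Real.log n = Real.log n + Real.log n from by ring, Real.exp_add,
        Real.exp_log hn0]
      ring
    rwa [hexp2] at hval
  set K : ℝ := (n:ℝ) ^ (Fintype.card V) with hK
  have hK0 : (0:ℝ) < K := by rw [hK]; positivity
  have hpair : ∀ p ∈ (univ : Finset (Fin n)).offDiag,
      ((badSet G n p.1 p.2 univ).card : ℝ) ≤ K * Real.exp (-(2*(M:ℝ)) * β) := by
    intro p hp
    rw [Finset.mem_offDiag] at hp
    have hb := badSet_card_le G n Δ hn hΔ hdeg p.1 p.2 hp.2.2 univ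
    rw [hm2u] at hb
    rw [← hβ] at hb
    calc ((badSet G n p.1 p.2 univ).card : ℝ)
        ≤ K * Real.exp (-((2*M : ℕ):ℝ) * β) := hb
      _ = K * Real.exp (-(2*(M:ℝ)) * β) := by push_cast; ring_nf
  -- union bound
  set BadAll : Finset (V → Fin n) := univ.filter
    (fun χ : V → Fin n => ¬ ∀ i j : Fin n, i ≠ j → ∃ u w, G.Adj u w ∧ χ u = i ∧ χ w = j)
    with hBadAll
  have hsubU : BadAll ⊆ (univ.offDiag).biUnion (fun p => badSet G n p.1 p.2 univ) := by
    intro χ hχ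
    rw [hBadAll, mem_filter] at hχ
    have hbad := hχ.2
    simp only [not_forall, exists_prop] at hbad
    obtain ⟨i, j, hij, hno⟩ := hbad
    rw [Finset.mem_biUnion]
    refine ⟨(i,j), by simp [Finset.mem_offDiag, hij], ?_⟩
    rw [badSet, mem_filter]
    refine ⟨mem_univ _, ?_⟩
    rintro ⟨u, _, w, _, ha, hb', hc⟩
    exact hno ⟨u, w, ha, hb', hc⟩
  have hoffcard : ((univ : Finset (Fin n)).offDiag).card ≤ n^2 := by
    calc ((univ : Finset (Fin n)).offDiag).card
        ≤ ((univ : Finset (Fin n)) ×ˢ (univ : Finset (Fin n))).card := by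
          apply Finset.card_le_card
          intro p hp
          rw [Finset.mem_offDiag] at hp
          rw [Finset.mem_product]
          exact ⟨hp.1, hp.2.1⟩
      _ = n^2 := by rw [Finset.card_product, Finset.card_univ, Fintype.card_fin]; ring
  have hcount : (BadAll.card : ℝ) < K := by
    have hstep1 : BadAll.card ≤ ∑ p ∈ (univ : Finset (Fin n)).offDiag,
        (badSet G n p.1 p.2 univ).card :=
      (Finset.card_le_card hsubU).trans (Finset.card_biUnion_le)
    have hstep2 : ((BadAll.card : ℕ) : ℝ) ≤ ∑ p ∈ (univ : Finset (Fin n)).offDiag,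
        ((badSet G n p.1 p.2 univ).card : ℝ) := by
      push_cast
      exact_mod_cast hstep1
    have hstep3 : ∑ p ∈ (univ : Finset (Fin n)).offDiag,
        ((badSet G n p.1 p.2 univ).card : ℝ)
        ≤ (n:ℝ)^2 * (K * Real.exp (-(2*(M:ℝ)) * β)) := by
      calc ∑ p ∈ (univ : Finset (Fin n)).offDiag,
          ((badSet G n p.1 p.2 univ).card : ℝ)
          ≤ ∑ _p ∈ (univ : Finset (Fin n)).offDiag,
            (K * Real.exp (-(2*(M:ℝ)) * β)) := Finset.sum_le_sum hpair
        _ = (((univ : Finset (Fin n)).offDiag).card : ℝ)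
            * (K * Real.exp (-(2*(M:ℝ)) * β)) := by
            rw [Finset.sum_const, nsmul_eq_mul]
        _ ≤ (n:ℝ)^2 * (K * Real.exp (-(2*(M:ℝ)) * β)) := by
            apply mul_le_mul_of_nonneg_right _ (by positivity)
            exact_mod_cast hoffcard
    have hstep4 : (n:ℝ)^2 * (K * Real.exp (-(2*(M:ℝ)) * β)) < K := by
      calc (n:ℝ)^2 * (K * Real.exp (-(2*(M:ℝ)) * β))
          < (n:ℝ)^2 * (K * ((n:ℝ)^2)⁻¹) := by
            apply mul_lt_mul_of_pos_left _ (by positivity)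
            exact mul_lt_mul_of_pos_left hexp hK0
        _ = K := by field_simp
    linarith
  have hcardlt : BadAll.card < Fintype.card (V → Fin n) := by
    have hcf : ((Fintype.card (V → Fin n) : ℕ) : ℝ) = K := by
      rw [hK, Fintype.card_fun, Fintype.card_fin]
      push_cast
      ring
    have : (BadAll.card : ℝ) < ((Fintype.card (V → Fin n) : ℕ) : ℝ) := by
      rw [hcf]; exact hcount
    exact_mod_cast this
  have hne : ∃ χ : V → Fin n, χ ∉ BadAll := by
    by_contra h
    push_neg at h
    have hsubA : (univ : Finset (V → Fin n)) ⊆ BadAll := fun χ _ => h χ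
    have := Finset.card_le_card hsubA
    rw [Finset.card_univ] at this
    omega
  obtain ⟨χ, hχ⟩ := hne
  have hgood : ∀ i j : Fin n, i ≠ j → ∃ u w, G.Adj u w ∧ χ u = i ∧ χ w = j := by
    by_contra hcon
    exact hχ (by rw [hBadAll, mem_filter]; exact ⟨mem_univ _, hcon⟩)
  refine ⟨fun i => univ.filter (fun v => χ v = i), ?_, ?_⟩
  · intro v
    refine ⟨χ v, by simp, ?_⟩
    intro i hi
    simp only [mem_filter] at hi
    exact hi.2.symm
  · intro i j hij
    obtain ⟨u, w, hadj, hu, hw⟩ := hgood i j hij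
    exact ⟨u, by simp [hu], w, by simp [hw], hadj⟩
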